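/- Let k be a positive integer and let G be a 50k-connected graph that contains no independent set of size k. Then G contains k pairwise vertex-disjoint triangles. -/

import Mathlib

universe u

variable {V : Type u}

/-- A graph is `k`-connected if it has more than `k` vertices and deleting any
set of fewer than `k` vertices leaves a connected graph. -/
def KConnected (G : SimpleGraph V) (k : ℕ) : Prop :=
  k < Nat.card V ∧ ∀ X : Set V, X.ncard < k → (G.induce Xᶜ).Connected

/-- A graph is bipartite if it is 2-colorable. -/
def Bipartite (G : SimpleGraph V) : Prop := G.Colorable 2

/-- `X` is an odd cycle cover of `G` if `G - X` is bipartite. -/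
def IsOddCycleCover (G : SimpleGraph V) (X : Set V) : Prop :=
  Bipartite (G.induce Xᶜ)

/-- `X` is a minimum odd cycle cover of `G`. -/
def IsMinOddCycleCover (G : SimpleGraph V) (X : Set V) : Prop :=
  IsOddCycleCover G X ∧ ∀ Y : Set V, IsOddCycleCover G Y → X.ncard ≤ Y.ncard

/-- The odd cycle cover `X` induces the partition `(A, B)`:
`(A \ X, B \ X)` is a bipartition of `G - X`, and a vertex of `X` lies in `A`
(resp. `B`) if it has more neighbours in `B \ X` than in `A \ X`
(resp. more neighbours in `A \ X` than in `B \ X`). -/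
def InducesPartition (G : SimpleGraph V) (X A B : Set V) : Prop :=
  (∀ u v, G.Adj u v → u ∉ X → v ∉ X → ¬(u ∈ A ∧ v ∈ A) ∧ ¬(u ∈ B ∧ v ∈ B)) ∧
  (∀ x ∈ X,
    ({y | G.Adj x y ∧ y ∈ A \ X}.ncard < {y | G.Adj x y ∧ y ∈ B \ X}.ncard → x ∈ A) ∧
    ({y | G.Adj x y ∧ y ∈ B \ X}.ncard < {y | G.Adj x y ∧ y ∈ A \ X}.ncard → x ∈ B))

/-- `(A, B)` is a nice partition of `G`. -/
def IsNicePartition (G : SimpleGraph V) (A B : Set V) : Prop :=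
  A ∪ B = Set.univ ∧ Disjoint A B ∧
    ∃ X : Set V, IsMinOddCycleCover G X ∧ InducesPartition G X A B

/-- The graph `G_{A,B} = G[A] ∪ G[B]`: edges of `G` with both ends in `A` or both in `B`. -/
def sideGraph (G : SimpleGraph V) (A B : Set V) : SimpleGraph V where
  Adj u v := G.Adj u v ∧ ((u ∈ A ∧ v ∈ A) ∨ (u ∈ B ∧ v ∈ B))
  symm := by
    constructor
    intro u v h
    exact ⟨h.1.symm, by tauto⟩
  loopless := by
    constructor
    intro v h
    exact G.loopless.irrefl v h.1

/-- A parity breaking matching for `(S, I)` with respect to `(A, B)`, where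
`S = {{s i, t i} : i}`: a matching `{m i : i ∈ I}` of edges of `G_{A,B}` such that
`m i` contains no vertex of `{s j, t j}` for `j ≠ i`. -/
def ParityBreakingMatching (G : SimpleGraph V) (A B : Set V) {k : ℕ}
    (s t : Fin k → V) (I : Finset (Fin k)) (m : Fin k → Sym2 V) : Prop :=
  (∀ i ∈ I, m i ∈ (sideGraph G A B).edgeSet) ∧
  (∀ i ∈ I, ∀ j ∈ I, i ≠ j → ∀ x ∈ m i, x ∉ m j) ∧
  (∀ i ∈ I, ∀ j : Fin k, j ≠ i → s j ∉ m i ∧ t j ∉ m i)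

/-- `P` is a family of pairwise vertex-disjoint paths, `P i` connecting `s i` and `t i`. -/
def DisjointPaths {k : ℕ} (G : SimpleGraph V) (s t : Fin k → V)
    (P : ∀ i, G.Walk (s i) (t i)) : Prop :=
  (∀ i, (P i).IsPath) ∧ ∀ i j, i ≠ j → ∀ x ∈ (P i).support, x ∉ (P j).support

/-- `G` is `k`-linked. -/
def KLinked (G : SimpleGraph V) (k : ℕ) : Prop :=
  ∀ s t : Fin k → V, Function.Injective (Sum.elim s t) →
    ∃ P : ∀ i, G.Walk (s i) (t i), DisjointPaths G s t P

/-- `G` is parity-`k`-linked. -/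
def ParityKLinked (G : SimpleGraph V) (k : ℕ) : Prop :=
  ∀ s t : Fin k → V, Function.Injective (Sum.elim s t) →
    ∀ p : Fin k → Bool,
      ∃ P : ∀ i, G.Walk (s i) (t i), DisjointPaths G s t P ∧
        ∀ i, (Odd (P i).length ↔ p i = true)

/-- A set of vertices is independent if no edge joins two of its vertices. -/
def IsIndepSet' (G : SimpleGraph V) (s : Set V) : Prop :=
  ∀ x ∈ s, ∀ y ∈ s, ¬ G.Adj x y

/-- `G` is parity-`k`-linked restricted to independent sets. -/
def ParityKLinkedIndep (G : SimpleGraph V) (k : ℕ) : Prop :=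
  ∀ s t : Fin k → V, Function.Injective (Sum.elim s t) →
    IsIndepSet' G (Set.range s ∪ Set.range t) →
    ∀ p : Fin k → Bool,
      ∃ P : ∀ i, G.Walk (s i) (t i), DisjointPaths G s t P ∧
        ∀ i, (Odd (P i).length ↔ p i = true)

/-- `G` contains `k` pairwise vertex-disjoint odd `S`-cycles. -/
def HasDisjointOddSCycles (G : SimpleGraph V) (S : Set V) (k : ℕ) : Prop :=
  ∃ (v : Fin k → V) (c : ∀ i, G.Walk (v i) (v i)),
    (∀ i, (c i).IsCycle ∧ Odd (c i).length ∧ ∃ x ∈ S, x ∈ (c i).support) ∧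
    ∀ i j, i ≠ j → ∀ x ∈ (c i).support, x ∉ (c j).support

/-- `G` contains an odd `S`-cycle. -/
def HasOddSCycle (G : SimpleGraph V) (S : Set V) : Prop :=
  ∃ (v : V) (c : G.Walk v v), c.IsCycle ∧ Odd c.length ∧ ∃ x ∈ S, x ∈ c.support

/-- `G` contains `k` pairwise vertex-disjoint odd cycles. -/
def HasDisjointOddCycles (G : SimpleGraph V) (k : ℕ) : Prop :=
  ∃ (v : Fin k → V) (c : ∀ i, G.Walk (v i) (v i)),
    (∀ i, (c i).IsCycle ∧ Odd (c i).length) ∧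
    ∀ i j, i ≠ j → ∀ x ∈ (c i).support, x ∉ (c j).support

/-- `C` is a vertex cover of `G`. -/
def IsVertexCover (G : SimpleGraph V) (C : Set V) : Prop :=
  ∀ e ∈ G.edgeSet, ∃ v ∈ C, v ∈ e

/-- The vertex cover number `τ(G)`. -/
noncomputable def vcNumber (G : SimpleGraph V) : ℕ :=
  sInf {n | ∃ C : Set V, IsVertexCover G C ∧ C.ncard = n}

/-- `P` is an odd `Z`-path: a path of odd length whose vertex set meets `Z`
exactly in its two end vertices. -/
def IsOddZPath (G : SimpleGraph V) (Z : Set V) {u v : V} (P : G.Walk u v) : Prop :=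
  P.IsPath ∧ Odd P.length ∧ u ∈ Z ∧ v ∈ Z ∧
    ∀ x ∈ P.support, x ∈ Z → x = u ∨ x = v

lemma exists_adj_of_walk {W : Type*} {H : SimpleGraph W} {u w : W} (h : u ≠ w)
    (p : H.Walk u w) : ∃ x, H.Adj u x := by
  cases p with
  | nil => exact absurd rfl h
  | cons h' _ => exact ⟨_, h'⟩

lemma mindeg [Fintype V] {G : SimpleGraph V} {k : ℕ} (hconn : KConnected G k) (v : V) :
    k ≤ (G.neighborSet v).ncard := by
  by_contra h
  push_neg at h
  set X : Set V := G.neighborSet v with hX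
  have hconn2 := hconn.2 X h
  have hv : v ∈ Xᶜ := by simp [hX]
  have hcard : 2 ≤ Xᶜ.ncard := by
    have h1 := Set.ncard_add_ncard_compl X
    have h2 : Nat.card V = Fintype.card V := Nat.card_eq_fintype_card
    have h3 : k < Nat.card V := hconn.1
    omega
  have hne : ((Xᶜ) \ {v} : Set V).Nonempty := by
    rw [Set.nonempty_iff_ne_empty]
    intro he
    have h4 := Set.ncard_diff_singleton_add_one hv (Set.toFinite _)
    rw [he] at h4
    simp at h4
    omega
  obtain ⟨w, hwX, hwv⟩ := hne
  obtain ⟨p⟩ := hconn2.preconnected ⟨v, hv⟩ ⟨w, hwX⟩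
  have hvw : (⟨v, hv⟩ : ↥Xᶜ) ≠ ⟨w, hwX⟩ := by
    intro hvw
    exact hwv (by simpa using (congrArg Subtype.val hvw).symm)
  obtain ⟨x, hx⟩ := exists_adj_of_walk hvw p
  exact x.2 (hx : G.Adj v ↑x)

lemma exists_adj_of_ncard {G : SimpleGraph V} {k : ℕ}
    (hindep : ¬ ∃ s : Set V, s.ncard = k ∧ IsIndepSet' G s)
    (s : Set V) (hs : k ≤ s.ncard) : ∃ u ∈ s, ∃ w ∈ s, G.Adj u w := by
  by_contra h
  push_neg at h
  obtain ⟨t, hts, htc⟩ := Set.exists_subset_card_eq hs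
  exact hindep ⟨t, htc, fun x hx y hy => h x (hts hx) y (hts hy)⟩

theorem stmt19 {V : Type u} [Fintype V] (k : ℕ) (hk : 0 < k)
    (G : SimpleGraph V) (hconn : KConnected G (50 * k))
    (hindep : ¬ ∃ s : Set V, s.ncard = k ∧ IsIndepSet' G s) :
    ∃ a b c : Fin k → V,
      (∀ i, G.Adj (a i) (b i) ∧ G.Adj (b i) (c i) ∧ G.Adj (a i) (c i)) ∧
      ∀ i j, i ≠ j → ({a i, b i, c i} : Set V) ∩ {a j, b j, c j} = ∅ := by
  classical
  have hVc : 50 * k < Fintype.card V := by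
    have := hconn.1; rwa [Nat.card_eq_fintype_card] at this
  have key : ∀ n, n ≤ k → ∃ (a b c : Fin n → V) (F : Finset V),
      F.card ≤ 3 * n ∧ (∀ i, a i ∈ F ∧ b i ∈ F ∧ c i ∈ F) ∧
      (∀ i, G.Adj (a i) (b i) ∧ G.Adj (b i) (c i) ∧ G.Adj (a i) (c i)) ∧
      (∀ i j, i ≠ j → ({a i, b i, c i} : Set V) ∩ {a j, b j, c j} = ∅) := by
    intro n
    induction n with
    | zero =>
      exact fun _ => ⟨Fin.elim0, Fin.elim0, Fin.elim0, ∅, by simp,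
        fun i => i.elim0, fun i => i.elim0, fun i => i.elim0⟩
    | succ n ih =>
      intro hn
      obtain ⟨a, b, c, F, hFc, hmem, htri, hdisj⟩ := ih (Nat.le_of_succ_le hn)
      have hFlt : F.card < Fintype.card V := by omega
      have hcne : (Fᶜ : Finset V).Nonempty := by
        rw [← Finset.card_pos, Finset.card_compl]; omega
      obtain ⟨v, hv⟩ := hcne
      have hvF : v ∉ F := Finset.mem_compl.mp hv
      have hdeg := mindeg hconn v
      have hsub : k ≤ (G.neighborSet v \ ↑F).ncard := by
        have h5 := Set.ncard_le_ncard_diff_add_ncard (G.neighborSet v) (↑F : Set V)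
        rw [Set.ncard_coe_finset] at h5
        omega
      obtain ⟨u, hu, w, hw, huw⟩ := exists_adj_of_ncard hindep _ hsub
      have hvu : G.Adj v u := hu.1
      have hvw : G.Adj v w := hw.1
      have huF : u ∉ F := fun h => hu.2 h
      have hwF : w ∉ F := fun h => hw.2 h
      refine ⟨Fin.snoc a v, Fin.snoc b u, Fin.snoc c w,
        insert v (insert u (insert w F)), ?_, ?_, ?_, ?_⟩
      · calc (insert v (insert u (insert w F))).card
            ≤ (insert u (insert w F)).card + 1 := Finset.card_insert_le _ _
          _ ≤ ((insert w F).card + 1) + 1 := by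
              exact Nat.add_le_add_right (Finset.card_insert_le _ _) 1
          _ ≤ ((F.card + 1) + 1) + 1 := by
              exact Nat.add_le_add_right (Nat.add_le_add_right (Finset.card_insert_le _ _) 1) 1
          _ ≤ 3 * (n + 1) := by omega
      · intro i
        refine Fin.lastCases ?_ ?_ i
        · simp [Fin.snoc_last]
        · intro i'
          simp only [Fin.snoc_castSucc]
          obtain ⟨h1, h2, h3⟩ := hmem i'
          exact ⟨by simp [h1], by simp [h2], by simp [h3]⟩
      · intro i
        refine Fin.lastCases ?_ ?_ i
        · simp only [Fin.snoc_last]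
          exact ⟨hvu, huw, hvw⟩
        · intro i'
          simp only [Fin.snoc_castSucc]
          exact htri i'
      · have hnew_old : ∀ j' : Fin n,
            ({v, u, w} : Set V) ∩ {a j', b j', c j'} = ∅ := by
          intro j'
          rw [Set.eq_empty_iff_forall_notMem]
          rintro x ⟨hx1, hx2⟩
          obtain ⟨h1, h2, h3⟩ := hmem j'
          have hxF : x ∈ F := by
            rcases hx2 with rfl | rfl | rfl
            · exact h1
            · exact h2
            · exact h3
          rcases hx1 with rfl | rfl | rfl
          · exact hvF hxF
          · exact huF hxF
          · exact hwF hxF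
        intro i j hij
        rcases Fin.eq_castSucc_or_eq_last i with ⟨i', rfl⟩ | rfl <;>
          rcases Fin.eq_castSucc_or_eq_last j with ⟨j', rfl⟩ | rfl
        · simp only [Fin.snoc_castSucc]
          exact hdisj i' j' (fun h => hij (by rw [h]))
        · simp only [Fin.snoc_last, Fin.snoc_castSucc]
          rw [Set.inter_comm]
          exact hnew_old i'
        · simp only [Fin.snoc_last, Fin.snoc_castSucc]
          exact hnew_old j'
        · exact absurd rfl hij
  obtain ⟨a, b, c, F, _, _, htri, hdisj⟩ := key k le_rfl
  exact ⟨a, b, c, htri, hdisj⟩
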